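/- Let η = diag(1,−1,…,−1) be the (n+1)×(n+1) Minkowski matrix (indices 0,…,n) and let g = Aᵀ η A for some invertible real (n+1)×(n+1) matrix A, so g is a symmetric invertible matrix of Lorentzian signature (1,n). Set G = g⁻¹ and assume G₀₀ > 0. Suppose ξ ∈ ℝ^{n+1} satisfies ξᵀ G ξ = 0 and (G ξ)₀ > 0 (i.e. Σ_{j=0}^n G₀ⱼ ξⱼ > 0, the 'larger-root' condition). Then for every ẋ ∈ ℝ^{n+1} with ẋᵀ g ẋ > 0 and ẋ₀ > 0 one has Σ_{j=0}^n ξⱼ ẋⱼ ≥ 0. -/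

import Mathlib

open Matrix

/-- Pure real-number core: reverse Cauchy–Schwarz sign argument in Minkowski space. -/
lemma mink_aux (U0 W0 Y0 nU nW nY pUW pUY pWY : ℝ)
    (hnU : 0 ≤ nU) (hnW : 0 ≤ nW) (hnY : 0 ≤ nY)
    (hCS_UW : pUW ^ 2 ≤ nU * nW) (hCS_UY : pUY ^ 2 ≤ nU * nY)
    (hCS_WY : pWY ^ 2 ≤ nW * nY)
    (hU : nU < U0 ^ 2) (hW : nW ≤ W0 ^ 2) (hY : nY < Y0 ^ 2)
    (hpUW : 0 < U0 * W0 - pUW) (hpUY : 0 < U0 * Y0 - pUY) :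
    0 ≤ W0 * Y0 - pWY := by
  have hUW2 : pUW ^ 2 ≤ (U0 * W0) ^ 2 := by nlinarith
  have hUY2 : pUY ^ 2 ≤ (U0 * Y0) ^ 2 := by nlinarith
  have h1 : 0 < U0 * W0 := by nlinarith
  have h2 : 0 < U0 * Y0 := by nlinarith
  have hU0sq : 0 < U0 ^ 2 := lt_of_le_of_lt hnU hU
  have h3 : 0 < W0 * Y0 := by nlinarith [mul_pos h1 h2]
  have hWY2 : pWY ^ 2 ≤ (W0 * Y0) ^ 2 := by nlinarith
  nlinarith

/-- Pointwise form of Theorem 2.1 (white-hole case): if `ξ` is a null covector for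
the inverse Lorentzian metric `G = g⁻¹` with `(G ξ)₀ > 0` (the larger-root
condition), then `ξ` pairs nonnegatively with every forward timelike vector. -/
theorem white_hole_conormal_pairing_nonneg (n : ℕ)
    (A g G : Matrix (Fin (n + 1)) (Fin (n + 1)) ℝ)
    (hA : IsUnit A.det)
    (hg : g = A.transpose *
      Matrix.diagonal (fun i : Fin (n + 1) => if i = 0 then (1 : ℝ) else -1) * A)
    (hG : G = g⁻¹)
    (hG00 : 0 < G 0 0)
    (ξ : Fin (n + 1) → ℝ)
    (hnull : dotProduct ξ (G.mulVec ξ) = 0)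
    (hroot : 0 < G.mulVec ξ 0) :
    ∀ xdot : Fin (n + 1) → ℝ,
      0 < dotProduct xdot (g.mulVec xdot) → 0 < xdot 0 →
      0 ≤ ∑ j : Fin (n + 1), ξ j * xdot j := by
  intro xdot hx hx0
  set d : Fin (n + 1) → ℝ := fun i => if i = 0 then (1 : ℝ) else -1 with hd
  have hdet_d : IsUnit (Matrix.diagonal d).det := by
    rw [Matrix.det_diagonal]
    apply isUnit_iff_ne_zero.2
    apply Finset.prod_ne_zero_iff.2
    intro i _
    by_cases hi : i = 0 <;> simp [hd, hi]
  have hgdet : IsUnit g.det := by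
    rw [hg, Matrix.det_mul, Matrix.det_mul, Matrix.det_transpose]
    exact (hA.mul hdet_d).mul hA
  have hgG : g * G = 1 := by rw [hG]; exact Matrix.mul_nonsing_inv g hgdet
  have hGg : G * g = 1 := by rw [hG]; exact Matrix.nonsing_inv_mul g hgdet
  have hgsymm : gᵀ = g := by
    rw [hg]
    simp [Matrix.transpose_mul, Matrix.diagonal_transpose, Matrix.mul_assoc]
  have hsym : ∀ a b : Fin (n + 1) → ℝ, a ⬝ᵥ g *ᵥ b = b ⬝ᵥ g *ᵥ a := by
    intro a b
    have hvm : a ᵥ* g = g *ᵥ a := by rw [← Matrix.vecMul_transpose, hgsymm]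
    rw [Matrix.dotProduct_mulVec, hvm, dotProduct_comm]
  set v : Fin (n + 1) → ℝ := G *ᵥ ξ with hv
  have hξv : g *ᵥ v = ξ := by rw [hv, Matrix.mulVec_mulVec, hgG, Matrix.one_mulVec]
  set e : Fin (n + 1) → ℝ := fun i => if i = 0 then 1 else 0 with he
  have hedot : ∀ w : Fin (n + 1) → ℝ, w ⬝ᵥ e = w 0 := by
    intro w
    simp [dotProduct, he]
  set u : Fin (n + 1) → ℝ := G *ᵥ e with hu
  have hgu : g *ᵥ u = e := by rw [hu, Matrix.mulVec_mulVec, hgG, Matrix.one_mulVec]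
  -- scalar identities
  have huu : u ⬝ᵥ g *ᵥ u = G 0 0 := by
    rw [hgu, hedot, hu]
    simp [Matrix.mulVec, dotProduct, he]
  have huv : u ⬝ᵥ g *ᵥ v = v 0 := by rw [hsym u v, hgu, hedot]
  have hux : u ⬝ᵥ g *ᵥ xdot = xdot 0 := by rw [hsym u xdot, hgu, hedot]
  have hvv : v ⬝ᵥ g *ᵥ v = 0 := by
    rw [hξv, dotProduct_comm]; exact hnull
  have hgoal : (∑ j : Fin (n + 1), ξ j * xdot j) = v ⬝ᵥ g *ᵥ xdot := by
    rw [← hsym xdot v, hξv]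
    simp [dotProduct, mul_comm]
  -- transformation to Minkowski coordinates
  have htrans : ∀ a b : Fin (n + 1) → ℝ, a ⬝ᵥ g *ᵥ b =
      (A *ᵥ a) 0 * (A *ᵥ b) 0 - ∑ i : Fin n, (A *ᵥ a) i.succ * (A *ᵥ b) i.succ := by
    intro a b
    rw [hg, ← Matrix.mulVec_mulVec, ← Matrix.mulVec_mulVec,
      Matrix.dotProduct_mulVec, Matrix.vecMul_transpose]
    simp only [dotProduct, Matrix.mulVec_diagonal]
    rw [Fin.sum_univ_succ]
    simp [hd, Fin.succ_ne_zero, mul_neg, neg_mul, sub_eq_add_neg]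
  -- Minkowski components
  set U : Fin (n + 1) → ℝ := A *ᵥ u with hU
  set W : Fin (n + 1) → ℝ := A *ᵥ v with hW
  set Y : Fin (n + 1) → ℝ := A *ᵥ xdot with hY
  have hsq : ∀ (f : Fin (n + 1) → ℝ), (∑ i : Fin n, f i.succ * f i.succ)
      = ∑ i : Fin n, f i.succ ^ 2 := by
    intro f; apply Finset.sum_congr rfl; intro i _; ring
  have hUU : (∑ i : Fin n, U i.succ ^ 2) < U 0 ^ 2 := by
    have := htrans u u; rw [huu] at this; nlinarith [hsq U]
  have hWW : (∑ i : Fin n, W i.succ ^ 2) ≤ W 0 ^ 2 := by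
    have := htrans v v; rw [hvv] at this; nlinarith [hsq W]
  have hYY : (∑ i : Fin n, Y i.succ ^ 2) < Y 0 ^ 2 := by
    have := htrans xdot xdot; rw [← hY] at this; nlinarith [hsq Y, hx]
  have hUW : 0 < U 0 * W 0 - ∑ i : Fin n, U i.succ * W i.succ := by
    have := htrans u v; rw [huv] at this; rw [← this]
    exact hroot
  have hUY : 0 < U 0 * Y 0 - ∑ i : Fin n, U i.succ * Y i.succ := by
    have := htrans u xdot; rw [hux] at this; rw [← this]; exact hx0
  rw [hgoal, htrans v xdot]
  exact mink_aux (U 0) (W 0) (Y 0) _ _ _ _ _ _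
    (Finset.sum_nonneg fun i _ => sq_nonneg _)
    (Finset.sum_nonneg fun i _ => sq_nonneg _)
    (Finset.sum_nonneg fun i _ => sq_nonneg _)
    (Finset.sum_mul_sq_le_sq_mul_sq _ _ _)
    (Finset.sum_mul_sq_le_sq_mul_sq _ _ _)
    (Finset.sum_mul_sq_le_sq_mul_sq _ _ _)
    hUU hWW hYY hUW hUY
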